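/- Let q be a prime power and k ≥ 2. If C is a minimal linear code over GF(q) of length n, dimension k, then n ≥ (q-1)(k-1) + 1 + Σ_{i=1}^{k-1} ⌈((q-1)(k-1)+1)/q^i⌉. -/

import Mathlib

open Finset

variable {F : Type} [Field F] [Fintype F] [DecidableEq F]

lemma my_cdiv_cdiv (a b c : ℕ) (hb : 0 < b) (hc : 0 < c) :
    a ⌈/⌉ b ⌈/⌉ c = a ⌈/⌉ (b * c) := by
  apply le_antisymm
  · rw [ceilDiv_le_iff_le_mul hc, ceilDiv_le_iff_le_mul hb]
    have := le_smul_ceilDiv (Nat.mul_pos hb hc) (b := a)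
    simpa [smul_eq_mul, mul_assoc] using this
  · rw [ceilDiv_le_iff_le_mul (Nat.mul_pos hb hc)]
    have h1 := le_smul_ceilDiv hb (b := a)
    have h2 := le_smul_ceilDiv hc (b := a ⌈/⌉ b)
    simp only [smul_eq_mul] at h1 h2
    calc a ≤ b * (a ⌈/⌉ b) := h1
    _ ≤ b * (c * (a ⌈/⌉ b ⌈/⌉ c)) := Nat.mul_le_mul_left _ h2
    _ = b * c * (a ⌈/⌉ b ⌈/⌉ c) := by ring

lemma my_cdiv_mono {a a' : ℕ} (b : ℕ) (h : a ≤ a') : a ⌈/⌉ b ≤ a' ⌈/⌉ b := by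
  rcases Nat.eq_zero_or_pos b with hb | hb
  · simp [hb]
  · rw [ceilDiv_le_iff_le_mul hb]
    exact h.trans (le_smul_ceilDiv hb)

lemma my_cdiv_pos {a b : ℕ} (ha : 0 < a) (hb : 0 < b) : 0 < a ⌈/⌉ b := by
  by_contra h
  push_neg at h
  rw [Nat.le_zero, ← Nat.le_zero, ceilDiv_le_iff_le_mul hb] at *
  omega

lemma my_ceil_cast (a b : ℕ) (hb : 0 < b) : ⌈(a : ℚ) / (b : ℚ)⌉₊ = a ⌈/⌉ b := by
  apply le_antisymm
  · rw [Nat.ceil_le, div_le_iff₀ (by positivity)]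
    have := le_smul_ceilDiv (b := a) hb
    simp only [smul_eq_mul] at this
    calc (a : ℚ) ≤ ((b * (a ⌈/⌉ b) : ℕ) : ℚ) := by exact_mod_cast this
    _ = (a ⌈/⌉ b : ℕ) * b := by push_cast; ring
  · rw [ceilDiv_le_iff_le_mul hb]
    have := Nat.le_ceil ((a : ℚ) / b)
    rw [div_le_iff₀ (by positivity)] at this
    have h2 : (a : ℚ) ≤ ((b * ⌈(a : ℚ) / b⌉₊ : ℕ) : ℚ) := by
      push_cast; linarith [this]
    exact_mod_cast h2

def wt {ι : Type} [Fintype ι] (z : ι → F) : ℕ :=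
  (Finset.univ.filter fun i => z i ≠ 0).card

lemma griesmer (q : ℕ) (hq : Fintype.card F = q) :
    ∀ (k : ℕ) (ι : Type) [Fintype ι] [DecidableEq ι] (C : Submodule F (ι → F)) (d : ℕ),
      Module.finrank F C = k → 0 < d → (∀ c ∈ C, c ≠ 0 → d ≤ wt c) →
      ∑ i ∈ Finset.range k, d ⌈/⌉ q ^ i ≤ Fintype.card ι := by
  have hq2 : 2 ≤ q := hq ▸ Fintype.one_lt_card
  have hq0 : 0 < q := by omega
  intro k
  induction k with
  | zero => intro ι _ _ C d _ _ _; simp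
  | succ k ih =>
    intro ι _ _ C d hdim hd hw
    classical
    have hC : C ≠ ⊥ := by
      intro h
      rw [h, finrank_bot] at hdim
      omega
    obtain ⟨c₁, hc₁C, hc₁0⟩ := (Submodule.ne_bot_iff C).1 hC
    obtain ⟨c, hcT, hminw⟩ := Finset.exists_min_image
      (Finset.univ.filter fun x => x ∈ C ∧ x ≠ 0) wt
      ⟨c₁, by simp [hc₁C, hc₁0]⟩
    simp only [mem_filter, mem_univ, true_and] at hcT
    obtain ⟨hcC, hc0⟩ := hcT
    have hwmin : ∀ x ∈ C, x ≠ 0 → wt c ≤ wt x := by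
      intro x hx hx0
      exact hminw x (by simp [hx, hx0])
    set S : Finset ι := Finset.univ.filter (fun i => c i ≠ 0) with hS
    set w : ℕ := wt c with hww
    have hwS : S.card = w := rfl
    have hdw : d ≤ w := hw c hcC hc0
    have hw0 : 0 < w := by omega
    have hwn : w ≤ Fintype.card ι := by
      rw [← hwS, ← Finset.card_univ]; exact Finset.card_filter_le _ _
    set π : (ι → F) →ₗ[F] ({i : ι // c i = 0} → F) :=
      LinearMap.funLeft F F (fun i' => i'.1) with hπ
    set g : C →ₗ[F] ({i : ι // c i = 0} → F) := π.comp C.subtype with hg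
    have hker : ∀ x : C, (∀ i : ι, c i = 0 → (x : ι → F) i = 0) →
        ∃ μ : F, (x : ι → F) = μ • c := by
      intro x hx
      obtain ⟨i₀, hi₀⟩ : ∃ i, c i ≠ 0 := by
        by_contra h; push_neg at h; exact hc0 (funext h)
      set μ := (x : ι → F) i₀ / c i₀ with hμ
      set y : ι → F := (x : ι → F) - μ • c with hy
      have hyC : y ∈ C := C.sub_mem x.2 (C.smul_mem μ hcC)
      have hysupp : (Finset.univ.filter fun i => y i ≠ 0) ⊆ S.erase i₀ := by
        intro i hi
        simp only [mem_filter, mem_univ, true_and, hy, Pi.sub_apply,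
          Pi.smul_apply, smul_eq_mul] at hi
        rw [Finset.mem_erase]
        constructor
        · rintro rfl
          apply hi
          rw [hμ]; field_simp; ring
        · simp only [hS, mem_filter, mem_univ, true_and]
          intro hci
          exact hi (by rw [hci, hx i hci, mul_zero, sub_zero])
      have hy0 : y = 0 := by
        by_contra hy0
        have h1 : w ≤ wt y := hwmin y hyC hy0
        have h2 : wt y ≤ (S.erase i₀).card := Finset.card_le_card hysupp
        have h3 : (S.erase i₀).card = w - 1 := by
          rw [Finset.card_erase_of_mem, hwS]
          simp [hS, hi₀]
        omega
      exact ⟨μ, by rw [← sub_eq_zero]; exact hy0⟩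
    have hc' : (⟨c, hcC⟩ : C) ≠ 0 := by
      intro h; exact hc0 (congrArg Subtype.val h)
    have hkereq : LinearMap.ker g = Submodule.span F {(⟨c, hcC⟩ : C)} := by
      apply le_antisymm
      · intro x hx
        rw [LinearMap.mem_ker] at hx
        have hx' : ∀ i : ι, c i = 0 → (x : ι → F) i = 0 := by
          intro i hi
          exact congrFun hx ⟨i, hi⟩
        obtain ⟨μ, hμ⟩ := hker x hx'
        rw [Submodule.mem_span_singleton]
        exact ⟨μ, Subtype.ext (by simpa using hμ.symm)⟩
      · rw [Submodule.span_le, Set.singleton_subset_iff]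
        simp only [SetLike.mem_coe, LinearMap.mem_ker]
        funext i'
        exact i'.2
    have hrank : Module.finrank F (LinearMap.range g) = k := by
      have h1 := LinearMap.finrank_range_add_finrank_ker g
      rw [hkereq, finrank_span_singleton hc', hdim] at h1
      omega
    have hresw : ∀ y ∈ LinearMap.range g, y ≠ 0 → d ⌈/⌉ q ≤ wt y := by
      intro y hy hy0
      obtain ⟨x, rfl⟩ := hy
      have hxnot : ∀ lam : F, (x : ι → F) ≠ lam • c := by
        intro lam hlam
        apply hy0
        funext i'
        show (x : ι → F) i'.1 = 0
        rw [hlam]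
        simp [i'.2]
      set N : ℕ := (Finset.univ.filter fun i => c i = 0 ∧ (x : ι → F) i ≠ 0).card with hN
      have hwty : wt (g x) = N := by
        rw [wt, ← Fintype.card_subtype, hN, ← Fintype.card_subtype]
        apply Fintype.card_congr
        exact Equiv.subtypeSubtypeEquivSubtypeInter (fun i => c i = 0)
          (fun i => (x : ι → F) i ≠ 0)
      have hzsum : ∀ lam : F,
          wt ((x : ι → F) - lam • c) =
            (S.filter fun i => ((x : ι → F) - lam • c) i ≠ 0).card + N := by
        intro lam
        rw [wt]
        rw [← Finset.card_filter_add_card_filter_not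
          (p := fun i => c i ≠ 0) (s := Finset.univ.filter
            fun i => ((x : ι → F) - lam • c) i ≠ 0)]
        congr 1
        · rw [hS, Finset.filter_filter, Finset.filter_filter]
          congr 1
          ext i
          simp only [mem_filter, mem_univ, true_and]
          tauto
        · rw [Finset.filter_filter, hN]
          congr 1
          ext i
          simp only [mem_filter, mem_univ, true_and, not_not, Pi.sub_apply,
            Pi.smul_apply, smul_eq_mul]
          constructor
          · rintro ⟨h1, h2⟩
            refine ⟨h2, ?_⟩
            intro h3
            rw [h2, h3, mul_zero, sub_zero] at h1
            exact h1 rfl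
          · rintro ⟨h1, h2⟩
            exact ⟨by rw [h1, mul_zero, sub_zero]; exact h2, h1⟩
      have hSsum : ∑ lam : F,
          (S.filter fun i => ((x : ι → F) - lam • c) i ≠ 0).card = w * (q - 1) := by
        have hc1 : ∀ lam : F, (S.filter fun i => ((x : ι → F) - lam • c) i ≠ 0).card
            = ∑ i ∈ S, if ((x : ι → F) - lam • c) i ≠ 0 then 1 else 0 :=
          fun lam => Finset.card_filter _ _
        simp_rw [hc1]
        rw [Finset.sum_comm]
        have hinner : ∀ i ∈ S,
            (∑ lam : F, if ((x : ι → F) - lam • c) i ≠ 0 then 1 else 0) = q - 1 := by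
          intro i hi
          have hci : c i ≠ 0 := by
            simp only [hS, mem_filter, mem_univ, true_and] at hi; exact hi
          rw [← Finset.card_filter]
          have hiff : ∀ lam : F,
              (¬ ((x : ι → F) - lam • c) i ≠ 0) ↔ lam = (x : ι → F) i / c i := by
            intro lam
            rw [not_not]
            simp only [Pi.sub_apply, Pi.smul_apply, smul_eq_mul, sub_eq_zero]
            rw [eq_div_iff hci]
            exact ⟨fun h => h.symm, fun h => h.symm⟩
          have hfe : (Finset.univ.filter fun lam : F =>
              ((x : ι → F) - lam • c) i ≠ 0)
              = Finset.univ \ {(x : ι → F) i / c i} := by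
            ext lam
            simp only [mem_filter, mem_univ, true_and, Finset.mem_sdiff,
              mem_singleton]
            rw [← hiff lam]
            exact not_not.symm
          rw [hfe, Finset.card_sdiff_of_subset (by simp), Finset.card_univ, hq,
            Finset.card_singleton]
        rw [Finset.sum_congr rfl hinner, Finset.sum_const, hwS, smul_eq_mul]
      have hlow : ∀ lam : F, w ≤ wt ((x : ι → F) - lam • c) := by
        intro lam
        apply hwmin _ (C.sub_mem x.2 (C.smul_mem _ hcC))
        intro h
        exact hxnot lam (by rwa [sub_eq_zero] at h)
      have hbig : q * w ≤ w * (q - 1) + q * N := by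
        calc q * w = ∑ _lam : F, w := by rw [Finset.sum_const, Finset.card_univ, hq,
              smul_eq_mul]
        _ ≤ ∑ lam : F, wt ((x : ι → F) - lam • c) := Finset.sum_le_sum fun lam _ => hlow lam
        _ = ∑ lam : F, ((S.filter fun i => ((x : ι → F) - lam • c) i ≠ 0).card + N) := by
              exact Finset.sum_congr rfl fun lam _ => hzsum lam
        _ = w * (q - 1) + q * N := by
              rw [Finset.sum_add_distrib, hSsum, Finset.sum_const, Finset.card_univ, hq,
                smul_eq_mul]
      have hwqN : w ≤ q * N := by
        have hA : w * (q - 1) + w = q * w := by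
          have h1 : q - 1 + 1 = q := by omega
          calc w * (q - 1) + w = w * ((q - 1) + 1) := by ring
          _ = w * q := by rw [h1]
          _ = q * w := by ring
        omega
      rw [hwty]
      rw [ceilDiv_le_iff_le_mul hq0]
      exact le_trans hdw hwqN
    have hIH := ih _ (LinearMap.range g) (d ⌈/⌉ q) hrank (my_cdiv_pos hd hq0) hresw
    have hcard' : Fintype.card {i : ι // c i = 0} = Fintype.card ι - w := by
      rw [Fintype.card_subtype]
      have hTT := Finset.card_filter_add_card_filter_not
        (s := (Finset.univ : Finset ι)) (p := fun i => c i ≠ 0)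
      simp only [not_not, Finset.card_univ] at hTT
      have : (Finset.univ.filter fun i => c i ≠ 0).card = w := hwS
      omega
    rw [Finset.sum_range_succ']
    have hterm : ∀ i ∈ Finset.range k, d ⌈/⌉ q ^ (i + 1) = d ⌈/⌉ q ⌈/⌉ q ^ i := by
      intro i _
      rw [my_cdiv_cdiv d q (q ^ i) hq0 (pow_pos hq0 i), ← pow_succ']
    rw [Finset.sum_congr rfl hterm]
    have h0 : d ⌈/⌉ q ^ 0 = d := by
      simp [Nat.ceilDiv_eq_add_pred_div]
    rw [h0]
    omega
lemma minimal_weight_bound {ι : Type} [Fintype ι] [DecidableEq ι]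
    (q k : ℕ) (hq : Fintype.card F = q) (C : Submodule F (ι → F))
    (hdim : Module.finrank F C = k) (hk : 1 ≤ k)
    (hmin : ∀ c ∈ C, c ≠ 0 → ∀ c' ∈ C, c' ≠ 0 →
      (∀ i, c' i ≠ 0 → c i ≠ 0) → ∃ lam : F, c' = lam • c) :
    ∀ c ∈ C, c ≠ 0 → (q - 1) * (k - 1) + 1 ≤ wt c := by
  classical
  intro c hcC hc0
  set m : ℕ := k - 1 with hm
  set c' : C := ⟨c, hcC⟩ with hc'
  have hc'0 : c' ≠ 0 := fun h => hc0 (congrArg Subtype.val h)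
  set sp : Submodule F C := Submodule.span F {c'} with hsp
  have hrkQ : Module.finrank F (C ⧸ sp) = m := by
    have h1 := Submodule.finrank_quotient_add_finrank sp
    rw [finrank_span_singleton hc'0, hdim] at h1
    omega
  set B : Module.Basis (Fin m) F (C ⧸ sp) := Module.finBasisOfFinrankEq F (C ⧸ sp) hrkQ with hB
  have hsur := Submodule.mkQ_surjective sp
  choose e he using fun j => hsur (B j)
  -- key claim
  have key : ∀ a : Fin m → F, a ≠ 0 → ∀ μ : F,
      ∃ i, c i ≠ 0 ∧ (∑ j, a j • (e j : ι → F)) i = μ * c i := by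
    intro a ha μ
    set x : C := ∑ j, a j • e j with hx
    have hxval : (x : ι → F) = ∑ j, a j • (e j : ι → F) := by
      simp [hx]
    have hmkx : sp.mkQ x ≠ 0 := by
      rw [hx, map_sum]
      simp_rw [map_smul, he]
      intro h
      apply ha
      have hli := B.linearIndependent
      rw [Fintype.linearIndependent_iff] at hli
      funext j
      exact hli a h j
    have hspan : ∀ ν : F, (x : ι → F) = ν • c → False := by
      intro ν hν
      apply hmkx
      have hxc : x = ν • c' := Subtype.ext (by simpa using hν)
      rw [hxc, map_smul, Submodule.mkQ_apply,
        (Submodule.Quotient.mk_eq_zero _).2 (Submodule.mem_span_singleton_self c'),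
        smul_zero]
    by_contra hcon
    push_neg at hcon
    rw [← hxval] at hcon
    set z : ι → F := (x : ι → F) - μ • c with hz
    have hzC : z ∈ C := C.sub_mem x.2 (C.smul_mem μ hcC)
    have hz0 : z ≠ 0 := by
      intro h
      rw [hz, sub_eq_zero] at h
      exact hspan μ h
    have hsupp : ∀ i, c i ≠ 0 → z i ≠ 0 := by
      intro i hci h
      rw [hz] at h
      simp only [Pi.sub_apply, Pi.smul_apply, smul_eq_mul, sub_eq_zero] at h
      exact hcon i hci h
    obtain ⟨lam, hlam⟩ := hmin z hzC hz0 c hcC hc0 hsupp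
    have hlam0 : lam ≠ 0 := by
      intro h; rw [h, zero_smul] at hlam; exact hc0 hlam
    have hzc : z = lam⁻¹ • c := by
      rw [hlam, smul_smul, inv_mul_cancel₀ hlam0, one_smul]
    apply hspan (μ + lam⁻¹)
    have : (x : ι → F) = μ • c + z := by rw [hz]; ring
    rw [this, hzc, add_smul]
  -- the support of c
  set S : Finset ι := Finset.univ.filter (fun i => c i ≠ 0) with hS
  have hSw : S.card = wt c := rfl
  have hSne : S.Nonempty := by
    rw [Finset.filter_nonempty_iff]
    by_contra h
    push_neg at h
    exact hc0 (funext fun i => by simpa using h i (Finset.mem_univ i))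
  obtain ⟨i₀, hi₀⟩ := hSne
  have hci₀ : c i₀ ≠ 0 := by simpa [hS] using hi₀
  set β : ι → Fin m → F := fun i j => (e j : ι → F) i / c i with hβ
  have hsurj : ∀ a : Fin m → F, a ≠ 0 → ∀ μ : F, ∃ i ∈ S, ∑ j, β i j * a j = μ := by
    intro a ha μ
    obtain ⟨i, hci, hsum⟩ := key a ha μ
    refine ⟨i, by simp [hS, hci], ?_⟩
    have hs : (∑ j, a j • (e j : ι → F)) i = ∑ j, a j * (e j : ι → F) i := by
      simp [Finset.sum_apply]
    rw [hs] at hsum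
    have hrw : ∑ j, β i j * a j = (∑ j, a j * (e j : ι → F) i) / c i := by
      rw [Finset.sum_div]
      apply Finset.sum_congr rfl
      intro j _
      rw [hβ]
      field_simp
    rw [hrw, hsum, mul_div_assoc, div_self hci, mul_one]
  -- translated family
  set b' : ι → Fin m → F := fun i j => β i j - β i₀ j with hb'
  have hblock : ∀ a : Fin m → F, a ≠ 0 →
      ∃ i ∈ S.erase i₀, ∑ j, b' i j * a j = 1 := by
    intro a ha
    obtain ⟨i, hiS, hsum⟩ := hsurj a ha (1 + ∑ j, β i₀ j * a j)
    have hval : ∑ j, b' i j * a j = 1 := by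
      rw [hb']
      simp only [sub_mul, Finset.sum_sub_distrib]
      rw [hsum]
      ring
    refine ⟨i, Finset.mem_erase.2 ⟨?_, hiS⟩, hval⟩
    rintro rfl
    rw [right_eq_add] at hsum
    exact one_ne_zero hsum
  -- the polynomial
  set P : MvPolynomial (Fin m) F :=
    ∏ i ∈ S.erase i₀, ((∑ j, MvPolynomial.C (b' i j) * MvPolynomial.X j)
      + MvPolynomial.C (-1)) with hP
  have heval : ∀ a : Fin m → F, MvPolynomial.eval a P
      = ∏ i ∈ S.erase i₀, ((∑ j, b' i j * a j) - 1) := by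
    intro a
    rw [hP, map_prod]
    apply Finset.prod_congr rfl
    intro i _
    rw [map_add, map_sum]
    simp [sub_eq_add_neg]
  have hvanish : ∀ a : Fin m → F, a ≠ 0 → MvPolynomial.eval a P = 0 := by
    intro a ha
    obtain ⟨i, hiE, hi1⟩ := hblock a ha
    rw [heval]
    apply Finset.prod_eq_zero hiE
    rw [hi1, sub_self]
  have hnz : MvPolynomial.eval 0 P ≠ 0 := by
    rw [heval]
    apply Finset.prod_ne_zero_iff.2
    intro i _
    simp
  have hdeg : P.totalDegree ≤ (S.erase i₀).card := by
    rw [hP]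
    refine le_trans (MvPolynomial.totalDegree_finset_prod _ _) ?_
    have hfac : ∀ i ∈ S.erase i₀,
        ((∑ j, MvPolynomial.C (b' i j) * MvPolynomial.X j)
          + MvPolynomial.C (-1) : MvPolynomial (Fin m) F).totalDegree ≤ 1 := by
      intro i _
      refine le_trans (MvPolynomial.totalDegree_add _ _) (max_le ?_ ?_)
      · apply MvPolynomial.totalDegree_finsetSum_le
        intro j _
        refine le_trans (MvPolynomial.totalDegree_mul _ _) ?_
        simp [MvPolynomial.totalDegree_C, MvPolynomial.totalDegree_X]
      · simp [MvPolynomial.totalDegree_C]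
    calc ∑ i ∈ S.erase i₀, ((∑ j, MvPolynomial.C (b' i j) * MvPolynomial.X j)
          + MvPolynomial.C (-1) : MvPolynomial (Fin m) F).totalDegree
        ≤ ∑ _i ∈ S.erase i₀, 1 := Finset.sum_le_sum hfac
    _ = (S.erase i₀).card := by simp
  have hfinal : (q - 1) * m ≤ (S.erase i₀).card := by
    by_contra hcon
    push_neg at hcon
    have hsum0 : ∑ a : Fin m → F, MvPolynomial.eval a P = 0 := by
      apply MvPolynomial.sum_eval_eq_zero
      rw [hq, Fintype.card_fin]
      omega
    have hsingle : ∑ a : Fin m → F, MvPolynomial.eval a P = MvPolynomial.eval 0 P := by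
      apply Finset.sum_eq_single_of_mem 0 (Finset.mem_univ _)
      intro a _ ha
      exact hvanish a ha
    exact hnz (by rw [← hsingle, hsum0])
  have hcard : (S.erase i₀).card = S.card - 1 := Finset.card_erase_of_mem hi₀
  have h1 : 1 ≤ S.card := Finset.card_pos.2 ⟨i₀, hi₀⟩
  rw [hcard, hSw] at hfinal
  rw [hSw] at h1
  omega

theorem stmt_11 {F : Type} [Field F] [Fintype F] [DecidableEq F]
    (q n k : ℕ) (hq : Fintype.card F = q) (hk : 2 ≤ k)
    (C : Submodule F (Fin n → F)) (hdim : Module.finrank F C = k)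
    (hmin : ∀ c ∈ C, c ≠ 0 → ∀ c' ∈ C, c' ≠ 0 →
      (∀ i, c' i ≠ 0 → c i ≠ 0) → ∃ lam : F, c' = lam • c) :
    (q - 1) * (k - 1) + 1 +
      ∑ i ∈ Finset.range (k - 1),
        ⌈(((q - 1) * (k - 1) + 1 : ℕ) : ℚ) / (q : ℚ) ^ (i + 1)⌉₊ ≤ n := by
  have hq2 : 2 ≤ q := hq ▸ Fintype.one_lt_card
  have hq0 : 0 < q := by omega
  set d0 : ℕ := (q - 1) * (k - 1) + 1 with hd0
  have hG := griesmer q hq k (Fin n) C d0 hdim (by omega)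
    (minimal_weight_bound q k hq C hdim (by omega) hmin)
  rw [Fintype.card_fin] at hG
  obtain ⟨k', rfl⟩ : ∃ k', k = k' + 1 := ⟨k - 1, by omega⟩
  rw [Finset.sum_range_succ'] at hG
  have h00 : d0 ⌈/⌉ q ^ 0 = d0 := by simp [Nat.ceilDiv_eq_add_pred_div]
  rw [h00] at hG
  have hconv : ∀ i ∈ Finset.range (k' + 1 - 1),
      ⌈((d0 : ℕ) : ℚ) / (q : ℚ) ^ (i + 1)⌉₊ = d0 ⌈/⌉ q ^ (i + 1) := by
    intro i _
    rw [show ((q : ℚ)) ^ (i + 1) = ((q ^ (i + 1) : ℕ) : ℚ) by push_cast; ring]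
    exact my_ceil_cast d0 (q ^ (i + 1)) (pow_pos hq0 _)
  rw [Finset.sum_congr rfl hconv]
  simp only [Nat.add_sub_cancel] at *
  omega
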